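/- arXiv:0807.2797 — 5 statements merged into one kernel-verified Lean document; each statement's English description precedes it below -/
import Mathlib

section
/- Let γ > 1 and define F(a, R) = (1/γ)(R + a)^γ − a^(γ−1) R − (1/γ) a^γ. There exists a constant C > 0, depending only on γ, such that for all a > 0 and all R with −a ≤ R ≤ a one has R² ≤ C · F(a, R) · a^(2−γ). -/
noncomputable def F (γ a R : ℝ) : ℝ :=
  (1 / γ) * (R + a) ^ γ - a ^ (γ - 1) * R - (1 / γ) * a ^ γ

/-- Scalar key lemma: there is `c > 0` with `c * t ^ 2 ≤ (1 + t) ^ γ - 1 - γ * t`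
on `[-1, 1]`. -/
lemma key_scalar (γ : ℝ) (hγ : 1 < γ) :
    ∃ c > 0, ∀ t : ℝ, -1 ≤ t → t ≤ 1 →
      c * t ^ 2 ≤ (1 + t) ^ γ - 1 - γ * t := by
  rcases le_or_gt 2 γ with h2 | h2
  · -- γ ≥ 2 : use (1+t)^γ = ((1+t)^2)^(γ/2) and Bernoulli
    refine ⟨γ / 2, by linarith, fun t ht _ => ?_⟩
    have h1t : (0:ℝ) ≤ 1 + t := by linarith
    have hu : (-1:ℝ) ≤ t ^ 2 + 2 * t := by nlinarith
    have hber := one_add_mul_self_le_rpow_one_add hu (p := γ / 2) (by linarith)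
    have heq : (1 + (t ^ 2 + 2 * t)) ^ (γ / 2) = (1 + t) ^ γ := by
      have : (1 : ℝ) + (t ^ 2 + 2 * t) = ((1 + t) ^ (2:ℝ)) := by
        rw [Real.rpow_two]; ring
      rw [this, ← Real.rpow_mul h1t]
      congr 1
      ring
    rw [heq] at hber
    nlinarith [hber]
  · -- 1 < γ < 2 : use (1+t)^(2-γ) ≤ 1 + (2-γ)t and divide
    have h3 : (0:ℝ) < 3 - γ := by linarith
    refine ⟨(γ - 1) ^ 2 / (3 - γ), div_pos (by nlinarith) h3, fun t ht ht' => ?_⟩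
    set c : ℝ := (γ - 1) ^ 2 / (3 - γ) with hc
    have hcnn : 0 < c := div_pos (by nlinarith) h3
    have h1t : (0:ℝ) ≤ 1 + t := by linarith
    have hD : 0 < 1 + (2 - γ) * t := by nlinarith
    have hber := rpow_one_add_le_one_add_mul_self ht (p := 2 - γ)
      (by linarith) (by linarith)
    -- (1+t)^γ * (1 + (2-γ)t) ≥ (1+t)^2
    have hprod : (1 + t) ^ (2:ℝ) ≤ (1 + t) ^ γ * (1 + (2 - γ) * t) := by
      calc (1 + t) ^ (2:ℝ) = (1 + t) ^ (γ + (2 - γ)) := by norm_num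
          _ = (1 + t) ^ γ * (1 + t) ^ (2 - γ) := Real.rpow_add' h1t (by norm_num)
          _ ≤ (1 + t) ^ γ * (1 + (2 - γ) * t) :=
            mul_le_mul_of_nonneg_left hber (Real.rpow_nonneg h1t γ)
    have hsq : (1 + t) ^ (2:ℝ) = (1 + t) ^ 2 := Real.rpow_two _
    rw [hsq] at hprod
    -- (1 + γt + c t²)(1 + (2-γ)t) ≤ (1+t)^2
    have hpoly : (1 + γ * t + c * t ^ 2) * (1 + (2 - γ) * t) ≤ (1 + t) ^ 2 := by
      have hcD : c * (1 + (2 - γ) * t) ≤ (γ - 1) ^ 2 := by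
        rw [hc, div_mul_eq_mul_div, div_le_iff₀ h3]
        nlinarith [mul_nonneg (mul_nonneg (sq_nonneg (γ-1)) (by linarith : (0:ℝ) ≤ 2-γ)) (by linarith : (0:ℝ) ≤ 1-t)]
      nlinarith [sq_nonneg t, mul_le_mul_of_nonneg_right hcD (sq_nonneg t)]
    have := hpoly.trans hprod
    have hle : 1 + γ * t + c * t ^ 2 ≤ (1 + t) ^ γ :=
      le_of_mul_le_mul_right (by linarith [this]) hD
    linarith

theorem sq_le_F_mul (γ : ℝ) (hγ : 1 < γ) :
    ∃ C > 0, ∀ a R : ℝ, 0 < a → -a ≤ R → R ≤ a →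
      R ^ 2 ≤ C * F γ a R * a ^ (2 - γ) := by
  obtain ⟨c, hc, hkey⟩ := key_scalar γ hγ
  have hγ0 : (0:ℝ) < γ := by linarith
  refine ⟨γ / c, by positivity, fun a R ha hR1 hR2 => ?_⟩
  set t : ℝ := R / a with htdef
  have ht1 : -1 ≤ t := by rw [htdef, le_div_iff₀ ha]; linarith
  have ht2 : t ≤ 1 := by rw [htdef, div_le_iff₀ ha]; linarith
  have hRt : R = a * t := by rw [htdef, mul_div_assoc', eq_div_iff ha.ne']; ring
  have h1t : (0:ℝ) ≤ 1 + t := by linarith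
  -- express F in terms of t
  have hpow : (R + a) ^ γ = a ^ γ * (1 + t) ^ γ := by
    rw [← Real.mul_rpow ha.le h1t]
    congr 1
    rw [hRt]; ring
  have hF : F γ a R = (1 / γ) * a ^ γ * ((1 + t) ^ γ - 1 - γ * t) := by
    rw [F, hpow, hRt]
    have haγ1 : a ^ (γ - 1) = a ^ γ / a := by
      rw [Real.rpow_sub ha, Real.rpow_one]
    rw [haγ1]
    field_simp
    ring
  have hkey' := hkey t ht1 ht2
  have haγ : 0 < a ^ γ := Real.rpow_pos_of_pos ha γ
  have ha2γ : 0 < a ^ (2 - γ) := Real.rpow_pos_of_pos ha (2 - γ)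
  have haa : a ^ γ * a ^ (2 - γ) = a ^ 2 := by
    rw [← Real.rpow_add ha, ← Real.rpow_two]
    norm_num
  have : γ / c * F γ a R * a ^ (2 - γ)
      = (1 / c) * (a ^ γ * a ^ (2 - γ)) * ((1 + t) ^ γ - 1 - γ * t) := by
    rw [hF]; field_simp
  rw [this, haa]
  have h2 : c * t ^ 2 * a ^ 2 ≤ ((1 + t) ^ γ - 1 - γ * t) * a ^ 2 :=
    mul_le_mul_of_nonneg_right hkey' (sq_nonneg a)
  have hR2t : R ^ 2 = t ^ 2 * a ^ 2 := by rw [hRt]; ring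
  rw [hR2t]
  calc t ^ 2 * a ^ 2 = (1 / c) * (c * t ^ 2 * a ^ 2) := by field_simp
    _ ≤ (1 / c) * (((1 + t) ^ γ - 1 - γ * t) * a ^ 2) := by
        apply mul_le_mul_of_nonneg_left h2 (by positivity)
    _ = 1 / c * a ^ 2 * ((1 + t) ^ γ - 1 - γ * t) := by ring
end

section
/- Let γ > 1 and define F(a, R) = (1/γ)(R + a)^γ − a^(γ−1) R − (1/γ) a^γ. There exists a constant C > 0, depending only on γ, such that for all a > 0 and all R ≥ a one has R^γ ≤ C · F(a, R). -/
theorem rpow_le_F (γ : ℝ) (hγ : 1 < γ) :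
    ∃ C > 0, ∀ a R : ℝ, 0 < a → a ≤ R →
      R ^ γ ≤ C * F γ a R := by
  have hγ0 : (0:ℝ) < γ := by linarith
  have hK : 0 < (2:ℝ) ^ γ - γ - 1 := by
    have h := one_add_mul_self_lt_rpow_one_add (s := 1) (by norm_num) (by norm_num) hγ
    norm_num at h
    linarith
  set K : ℝ := (2:ℝ) ^ γ - γ - 1 with hKdef
  refine ⟨γ * (K + γ) / K, by positivity, ?_⟩
  intro a R ha haR
  have hR : 0 < R := lt_of_lt_of_le ha haR
  have hRa : 0 < R + a := by linarith
  set P : ℝ := a ^ (γ - 1) with hPdef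
  have hP : 0 < P := Real.rpow_pos_of_pos ha _
  have hPa : P * a = a ^ γ := by
    rw [hPdef, ← Real.rpow_add_one ha.ne' (γ - 1)]
    ring_nf
  -- superadditivity: R^γ + a^γ ≤ (R+a)^γ
  have hA : R ^ γ + a ^ γ ≤ (R + a) ^ γ := by
    have h1 : R ^ γ ≤ R * (R + a) ^ (γ - 1) := by
      have : R ^ (γ - 1) ≤ (R + a) ^ (γ - 1) :=
        Real.rpow_le_rpow hR.le (by linarith) (by linarith)
      calc R ^ γ = R * R ^ (γ - 1) := by
            rw [mul_comm, ← Real.rpow_add_one hR.ne' (γ - 1)]; ring_nf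
        _ ≤ R * (R + a) ^ (γ - 1) := by nlinarith
    have h2 : a ^ γ ≤ a * (R + a) ^ (γ - 1) := by
      have : a ^ (γ - 1) ≤ (R + a) ^ (γ - 1) :=
        Real.rpow_le_rpow ha.le (by linarith) (by linarith)
      calc a ^ γ = a * a ^ (γ - 1) := by
            rw [mul_comm, ← Real.rpow_add_one ha.ne' (γ - 1)]; ring_nf
        _ ≤ a * (R + a) ^ (γ - 1) := by nlinarith
    have h3 : (R + a) ^ γ = (R + a) * (R + a) ^ (γ - 1) := by
      rw [mul_comm, ← Real.rpow_add_one hRa.ne' (γ - 1)]; ring_nf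
    nlinarith [Real.rpow_pos_of_pos hRa (γ - 1)]
  -- convexity chord bound: 2^γ * P * R ≤ (R - a) * P + (a + R)^γ
  have hB : (2:ℝ) ^ γ * (P * R) ≤ (R - a) * P + (R + a) ^ γ := by
    have hθ : (0:ℝ) ≤ (R - a) / R := div_nonneg (by linarith) hR.le
    have hμ : (0:ℝ) ≤ a / R := by positivity
    have hsum : (R - a) / R + a / R = 1 := by field_simp; ring
    have hconv := (convexOn_rpow hγ.le).2 (Set.mem_Ici.mpr ha.le)
      (Set.mem_Ici.mpr hRa.le) hθ hμ hsum
    simp only [smul_eq_mul] at hconv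
    have harg : (R - a) / R * a + a / R * (R + a) = 2 * a := by field_simp; ring
    rw [harg] at hconv
    have h2a : (2 * a) ^ γ = 2 ^ γ * a ^ γ := Real.mul_rpow (by norm_num) ha.le
    rw [h2a] at hconv
    -- multiply by R: 2^γ * a^γ * R ≤ (R - a) * a^γ + a * (R+a)^γ
    have hmul : 2 ^ γ * a ^ γ * R ≤ (R - a) * a ^ γ + a * (R + a) ^ γ := by
      have := mul_le_mul_of_nonneg_right hconv hR.le
      calc 2 ^ γ * a ^ γ * R = (2 ^ γ * a ^ γ) * R := by ring
        _ ≤ ((R - a) / R * a ^ γ + a / R * (R + a) ^ γ) * R := this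
        _ = (R - a) * a ^ γ + a * (R + a) ^ γ := by field_simp
    -- divide by a, using a^γ = P * a
    rw [← hPa] at hmul
    have : a * (2 ^ γ * (P * R)) ≤ a * ((R - a) * P + (R + a) ^ γ) := by nlinarith
    exact le_of_mul_le_mul_left this ha
  -- two lower bounds for γ * F
  have hFdef : γ * F γ a R = (R + a) ^ γ - γ * (P * R) - a ^ γ := by
    rw [F]
    field_simp
    rw [hPdef]
  have g1 : R ^ γ - γ * (P * R) ≤ γ * F γ a R := by
    rw [hFdef]; linarith
  have g2 : K * (P * R) ≤ γ * F γ a R := by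
    rw [hFdef, hKdef, ← hPa]
    nlinarith
  -- combine
  rw [div_mul_eq_mul_div, le_div_iff₀ hK, ← sub_nonneg]
  have c1 := mul_le_mul_of_nonneg_left g1 hK.le
  have c2 := mul_le_mul_of_nonneg_left g2 hγ0.le
  nlinarith [mul_pos hP hR]
end

section
/- Gronwall-type lemma with quadratic dissipation: Let T > 0 and let f, g', α, β : [0,T] → ℝ be nonnegative measurable functions with f differentiable, g(t) = ∫₀ᵗ g'(s) ds, such that the differential inequality f'(t) + (g'(t))² ≤ α(t) f(t) + β(t) g'(t) g(t) holds for a.e. t ∈ [0,T]. Assume f is bounded, g' ∈ L²([0,T]), α ∈ L¹([0,T]), and t ↦ √t β(t) ∈ L²([0,T]). Then for every t ∈ [0,T]: ( e^{−∫₀ᵗ α} − 1/2 − (1/2)∫₀ᵗ s β(s)² ds ) · ∫₀ᵗ (g'(s))² ds + e^{−∫₀ᵗ α} f(t) ≤ f(0). -/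
open MeasureTheory

open Set


lemma exp_quad_bound {x : ℝ} (hx : 0 ≤ x) : Real.exp (-x) ≤ 1 - x + x ^ 2 := by
  have h1 : (1 + x) * Real.exp (-x) ≤ 1 := by
    have := mul_le_mul_of_nonneg_right (Real.add_one_le_exp x) (Real.exp_pos (-x)).le
    rwa [← Real.exp_add, add_neg_cancel, Real.exp_zero, add_comm] at this
  have h2 : 1 - x ≤ Real.exp (-x) := by linarith [Real.add_one_le_exp (-x)]
  nlinarith [Real.exp_pos (-x)]

lemma exp_piece_bound {a b : ℝ} (hab : a ≤ b) :
    (b - a) * Real.exp b ≤ Real.exp b - Real.exp a + (b - a) ^ 2 * Real.exp b := by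
  have h := exp_quad_bound (x := b - a) (by linarith)
  have hE : Real.exp a = Real.exp b * Real.exp (-(b - a)) := by
    rw [← Real.exp_add]; ring_nf
  nlinarith [Real.exp_pos b, mul_le_mul_of_nonneg_left h (Real.exp_pos b).le]

lemma exp_integral_bound {α : ℝ → ℝ} {t : ℝ} (ht : 0 ≤ t)
    (hint : IntegrableOn α (Icc 0 t))
    (hnn : ∀ s ∈ Icc 0 t, 0 ≤ α s) :
    ∫ s in Icc 0 t, α s * Real.exp (∫ u in Icc 0 s, α u)
      ≤ Real.exp (∫ u in Icc 0 t, α u) - 1 := by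
  set A : ℝ → ℝ := fun x => ∫ u in Icc 0 x, α u with hA
  have hA0 : A 0 = 0 := by
    simp [hA, Icc_self, Measure.restrict_singleton]
  have hadd : ∀ u v : ℝ, 0 ≤ u → u ≤ v → v ≤ t →
      A v = A u + ∫ s in Ioc u v, α s := by
    intro u v hu huv hvt
    have h1 : Ioc (0:ℝ) u ∪ Ioc u v = Ioc 0 v := Ioc_union_Ioc_eq_Ioc hu huv
    have h2 : IntegrableOn α (Ioc 0 u) :=
      hint.mono_set (fun x hx => ⟨hx.1.le, hx.2.trans (huv.trans hvt)⟩)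
    have h3 : IntegrableOn α (Ioc u v) :=
      hint.mono_set (fun x hx => ⟨hu.trans hx.1.le, hx.2.trans hvt⟩)
    simp only [hA, integral_Icc_eq_integral_Ioc]
    rw [← h1, setIntegral_union (Ioc_disjoint_Ioc_of_le le_rfl) measurableSet_Ioc h2 h3]
  have hmono : ∀ u v : ℝ, 0 ≤ u → u ≤ v → v ≤ t → A u ≤ A v := by
    intro u v hu huv hvt
    rw [hadd u v hu huv hvt]
    have : 0 ≤ ∫ s in Ioc u v, α s :=
      setIntegral_nonneg measurableSet_Ioc
        (fun x hx => hnn x ⟨hu.trans hx.1.le, hx.2.trans hvt⟩)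
    linarith
  have hAnn : ∀ x ∈ Icc (0:ℝ) t, 0 ≤ A x := by
    intro x hx
    exact setIntegral_nonneg measurableSet_Icc
      (fun u hu => hnn u ⟨hu.1, hu.2.trans hx.2⟩)
  have hcontA : ContinuousOn A (Icc 0 t) := intervalIntegral.continuousOn_primitive_Icc hint
  have hcontE : ContinuousOn (fun x => Real.exp (A x)) (Icc 0 t) :=
    Real.continuous_exp.comp_continuousOn hcontA
  have hF_int : IntegrableOn (fun s => α s * Real.exp (A s)) (Icc 0 t) := by
    apply Integrable.mono' (hint.const_mul (Real.exp (A t)))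
    · exact hint.aestronglyMeasurable.mul
        (hcontE.aestronglyMeasurable measurableSet_Icc)
    · filter_upwards [ae_restrict_mem measurableSet_Icc] with s hs
      rw [Real.norm_eq_abs, abs_of_nonneg (mul_nonneg (hnn s hs) (Real.exp_pos _).le),
        mul_comm]
      exact mul_le_mul_of_nonneg_right
        (Real.exp_le_exp.2 (hmono s t hs.1 hs.2 le_rfl)) (hnn s hs)
  rcases ht.eq_or_lt with rfl | htpos
  · simp [Icc_self, Measure.restrict_singleton, hA0]
  apply le_of_forall_pos_le_add
  intro ε hε
  set M : ℝ := Real.exp (A t) with hM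
  have hM1 : 1 ≤ M := Real.one_le_exp (hAnn t ⟨ht, le_rfl⟩)
  have hMpos : 0 < M := Real.exp_pos _
  have hAt : 0 ≤ A t := hAnn t ⟨ht, le_rfl⟩
  set η : ℝ := ε / (M * (A t + 1)) with hηdef
  have hη : 0 < η := div_pos hε (mul_pos hMpos (by linarith))
  have huc := (isCompact_Icc (a := (0:ℝ)) (b := t)).uniformContinuousOn_of_continuous hcontA
  rw [Metric.uniformContinuousOn_iff] at huc
  obtain ⟨δ, hδ, hδ'⟩ := huc η hη
  obtain ⟨n, hn⟩ := exists_nat_gt (t / δ)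
  have hn0 : 0 < (n:ℝ) := lt_of_le_of_lt (div_nonneg ht hδ.le) hn
  have hstepδ : t / n < δ := by
    rw [div_lt_iff₀ hn0]
    rw [div_lt_iff₀ hδ] at hn
    linarith [hn]
  set p : ℕ → ℝ := fun i => (i : ℝ) * (t / n) with hp
  have hp0 : p 0 = 0 := by simp [hp]
  have hpn : p n = t := by simp only [hp]; field_simp [hn0.ne']
  have hple : ∀ i, p i ≤ p (i+1) := by
    intro i
    have : (i:ℝ) ≤ (i:ℝ) + 1 := by linarith
    simp only [hp]
    push_cast
    nlinarith [div_nonneg ht hn0.le]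
  have hpstep : ∀ i, p (i+1) - p i = t / n := by
    intro i; simp only [hp]; push_cast; ring
  have hpmem : ∀ i, i ≤ n → p i ∈ Icc (0:ℝ) t := by
    intro i hi
    constructor
    · exact mul_nonneg (Nat.cast_nonneg i) (div_nonneg ht hn0.le)
    · have : (i:ℝ) * (t/n) ≤ (n:ℝ) * (t/n) :=
        mul_le_mul_of_nonneg_right (Nat.cast_le.2 hi) (div_nonneg ht hn0.le)
      calc p i ≤ (n:ℝ) * (t/n) := this
        _ = t := by field_simp
  have hFi : ∀ k, k < n → IntervalIntegrable (fun u => α u * Real.exp (A u))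
      volume (p k) (p (k+1)) := by
    intro k hk
    rw [intervalIntegrable_iff_integrableOn_Ioc_of_le (hple k)]
    exact hF_int.mono_set (fun x hx =>
      ⟨(hpmem k hk.le).1.trans hx.1.le, hx.2.trans (hpmem (k+1) hk).2⟩)
  have hsplit : ∫ s in Icc 0 t, α s * Real.exp (A s)
      = ∑ i ∈ Finset.range n, ∫ u in p i..p (i+1), α u * Real.exp (A u) := by
    rw [intervalIntegral.sum_integral_adjacent_intervals hFi, hp0, hpn,
      intervalIntegral.integral_of_le ht, integral_Icc_eq_integral_Ioc]
  have key : ∀ i, i < n →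
      ∫ u in p i..p (i+1), α u * Real.exp (A u)
        ≤ (Real.exp (A (p (i+1))) - Real.exp (A (p i)))
          + (η * M) * (A (p (i+1)) - A (p i)) := by
    intro i hi
    have ha := hpmem i hi.le
    have hb := hpmem (i+1) hi
    have hsub : Ioc (p i) (p (i+1)) ⊆ Icc (0:ℝ) t :=
      fun x hx => ⟨ha.1.trans hx.1.le, hx.2.trans hb.2⟩
    have hAab : A (p i) ≤ A (p (i+1)) := hmono _ _ ha.1 (hple i) hb.2
    have hΔ : A (p (i+1)) - A (p i) < η := by
      have hd : dist (p i) (p (i+1)) < δ := by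
        rw [Real.dist_eq, abs_of_nonpos (by linarith [hple i])]
        rw [neg_sub, hpstep i]; exact hstepδ
      have := hδ' (p i) ha (p (i+1)) hb hd
      rw [Real.dist_eq, abs_of_nonpos (by linarith)] at this
      linarith
    have hEb : Real.exp (A (p (i+1))) ≤ M :=
      Real.exp_le_exp.2 (hmono _ _ hb.1 hb.2 le_rfl)
    calc ∫ u in p i..p (i+1), α u * Real.exp (A u)
        = ∫ u in Ioc (p i) (p (i+1)), α u * Real.exp (A u) :=
          intervalIntegral.integral_of_le (hple i)
      _ ≤ ∫ u in Ioc (p i) (p (i+1)), α u * Real.exp (A (p (i+1))) := by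
          apply setIntegral_mono_on (hF_int.mono_set hsub)
            ((hint.mono_set hsub).mul_const _) measurableSet_Ioc
          intro u hu
          have huI : u ∈ Icc (0:ℝ) t := hsub hu
          exact mul_le_mul_of_nonneg_left
            (Real.exp_le_exp.2 (hmono u (p (i+1)) huI.1 hu.2 hb.2)) (hnn u huI)
      _ = (A (p (i+1)) - A (p i)) * Real.exp (A (p (i+1))) := by
          rw [integral_mul_const]
          congr 1
          have := hadd (p i) (p (i+1)) ha.1 (hple i) hb.2
          linarith
      _ ≤ Real.exp (A (p (i+1))) - Real.exp (A (p i))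
          + (A (p (i+1)) - A (p i)) ^ 2 * Real.exp (A (p (i+1))) :=
          exp_piece_bound hAab
      _ ≤ (Real.exp (A (p (i+1))) - Real.exp (A (p i)))
          + (η * M) * (A (p (i+1)) - A (p i)) := by
          have h1 : 0 ≤ A (p (i+1)) - A (p i) := by linarith
          nlinarith [mul_nonneg (mul_nonneg (sub_nonneg.2 hΔ.le) h1)
              (Real.exp_pos (A (p (i+1)))).le,
            mul_nonneg (mul_nonneg hη.le h1) (sub_nonneg.2 hEb)]
  have hsum1 : ∑ i ∈ Finset.range n, (Real.exp (A (p (i+1))) - Real.exp (A (p i)))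
      = M - 1 := by
    rw [Finset.sum_range_sub (fun i => Real.exp (A (p i))), hpn, hp0, hA0, Real.exp_zero]
  have hsum2 : ∑ i ∈ Finset.range n, (A (p (i+1)) - A (p i)) = A t := by
    rw [Finset.sum_range_sub (fun i => A (p i)), hpn, hp0, hA0, sub_zero]
  have hfinal : η * M * A t ≤ ε := by
    have h1 : η * (M * (A t + 1)) = ε := by
      rw [hηdef]; exact div_mul_cancel₀ _ (ne_of_gt (mul_pos hMpos (by linarith)))
    nlinarith [hη, hMpos, hAt]
  calc ∫ s in Icc 0 t, α s * Real.exp (A s)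
      = ∑ i ∈ Finset.range n, ∫ u in p i..p (i+1), α u * Real.exp (A u) := hsplit
    _ ≤ ∑ i ∈ Finset.range n, ((Real.exp (A (p (i+1))) - Real.exp (A (p i)))
          + (η * M) * (A (p (i+1)) - A (p i))) :=
        Finset.sum_le_sum (fun i hi => key i (Finset.mem_range.1 hi))
    _ = (M - 1) + η * M * A t := by
        rw [Finset.sum_add_distrib, hsum1, ← Finset.mul_sum, hsum2]
        try ring
    _ ≤ M - 1 + ε := by linarith


lemma primitive_mono {ψ : ℝ → ℝ} {T : ℝ} (hint : IntegrableOn ψ (Icc 0 T))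
    (hnn : ∀ s ∈ Icc 0 T, 0 ≤ ψ s) {u v : ℝ} (hu : 0 ≤ u) (huv : u ≤ v) (hvT : v ≤ T) :
    (∫ s in Icc 0 u, ψ s) ≤ ∫ s in Icc 0 v, ψ s := by
  have h1 : Ioc (0:ℝ) u ∪ Ioc u v = Ioc 0 v := Ioc_union_Ioc_eq_Ioc hu huv
  have h2 : IntegrableOn ψ (Ioc 0 u) :=
    hint.mono_set (fun x hx => ⟨hx.1.le, hx.2.trans (huv.trans hvT)⟩)
  have h3 : IntegrableOn ψ (Ioc u v) :=
    hint.mono_set (fun x hx => ⟨hu.trans hx.1.le, hx.2.trans hvT⟩)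
  have h4 : 0 ≤ ∫ s in Ioc u v, ψ s :=
    setIntegral_nonneg measurableSet_Ioc
      (fun x hx => hnn x ⟨hu.trans hx.1.le, hx.2.trans hvT⟩)
  rw [integral_Icc_eq_integral_Ioc, integral_Icc_eq_integral_Ioc, ← h1,
    setIntegral_union (Ioc_disjoint_Ioc_of_le le_rfl) measurableSet_Ioc h2 h3]
  linarith

lemma cs_bound {g' : ℝ → ℝ} {s : ℝ} (hs : 0 ≤ s)
    (hint : IntegrableOn g' (Icc 0 s)) (hint2 : IntegrableOn (fun u => g' u ^ 2) (Icc 0 s))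
    (hnn : ∀ u ∈ Icc 0 s, 0 ≤ g' u) :
    (∫ u in Icc 0 s, g' u) ^ 2 ≤ s * ∫ u in Icc 0 s, g' u ^ 2 := by
  set I := ∫ u in Icc 0 s, g' u with hIdef
  set G := ∫ u in Icc 0 s, g' u ^ 2 with hGdef
  have hI : 0 ≤ I := setIntegral_nonneg measurableSet_Icc hnn
  have hG : 0 ≤ G := setIntegral_nonneg measurableSet_Icc (fun u _ => sq_nonneg _)
  have hvol : (volume (Icc (0:ℝ) s)).toReal = s := by
    rw [Real.volume_Icc, ENNReal.toReal_ofReal (by linarith)]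
    ring
  have key : ∀ r : ℝ, 0 < r → 2 * r * I ≤ r ^ 2 * G + s := by
    intro r hr
    have hcint : IntegrableOn (fun _ : ℝ => (1:ℝ)) (Icc 0 s) :=
      integrableOn_const isCompact_Icc.measure_lt_top.ne
    have hRint : IntegrableOn (fun u => r ^ 2 * g' u ^ 2 + 1) (Icc 0 s) := by
      exact (hint2.const_mul (r ^ 2)).add hcint
    have h1 : ∫ u in Icc 0 s, (2 * r) * g' u
        ≤ ∫ u in Icc 0 s, (r ^ 2 * g' u ^ 2 + 1) := by
      apply setIntegral_mono_on (hint.const_mul _) hRint measurableSet_Icc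
      intro u _
      nlinarith [sq_nonneg (r * g' u - 1)]
    rw [MeasureTheory.integral_const_mul, integral_add (hint2.const_mul _) hcint,
      MeasureTheory.integral_const_mul, setIntegral_const, measureReal_def, hvol] at h1
    simpa [← hIdef, ← hGdef] using h1
  by_cases hI0 : I ≤ 0
  · have : I = 0 := le_antisymm hI0 hI
    rw [this]
    nlinarith [mul_nonneg hs hG]
  push_neg at hI0
  rcases hG.eq_or_lt with hG0 | hGpos
  · exfalso
    have hk := key ((s + 1) / (2 * I)) (by positivity)
    rw [← hG0] at hk
    have : 2 * ((s + 1) / (2 * I)) * I = s + 1 := by field_simp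
    rw [this] at hk
    nlinarith [sq_nonneg ((s + 1) / (2 * I))]
  · have hk := key (I / G) (div_pos hI0 hGpos)
    have hGne : G ≠ 0 := ne_of_gt hGpos
    have h2 := mul_le_mul_of_nonneg_right hk hG
    have e1 : 2 * (I / G) * I * G = 2 * I ^ 2 := by field_simp
    have e2 : ((I / G) ^ 2 * G + s) * G = I ^ 2 + s * G := by
      field_simp
    rw [e1, e2] at h2
    linarith

lemma gronwall_const {h α : ℝ → ℝ} {c t₀ : ℝ} (ht₀ : 0 ≤ t₀) (hc : 0 ≤ c)
    (hcont : ContinuousOn h (Icc 0 t₀))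
    (hαint : IntegrableOn α (Icc 0 t₀))
    (hαnn : ∀ s ∈ Icc 0 t₀, 0 ≤ α s)
    (hαh : IntegrableOn (fun s => α s * h s) (Icc 0 t₀))
    (hle : ∀ t ∈ Icc 0 t₀, h t ≤ c + ∫ s in Icc 0 t, α s * h s) :
    h t₀ ≤ c * Real.exp (∫ s in Icc 0 t₀, α s) := by
  set A : ℝ → ℝ := fun x => ∫ u in Icc 0 x, α u with hA
  have hmono : ∀ u v : ℝ, 0 ≤ u → u ≤ v → v ≤ t₀ → A u ≤ A v := by
    intro u v hu huv hvt
    have h1 : Ioc (0:ℝ) u ∪ Ioc u v = Ioc 0 v := Ioc_union_Ioc_eq_Ioc hu huv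
    have h2 : IntegrableOn α (Ioc 0 u) :=
      hαint.mono_set (fun x hx => ⟨hx.1.le, hx.2.trans (huv.trans hvt)⟩)
    have h3 : IntegrableOn α (Ioc u v) :=
      hαint.mono_set (fun x hx => ⟨hu.trans hx.1.le, hx.2.trans hvt⟩)
    have h4 : 0 ≤ ∫ s in Ioc u v, α s :=
      setIntegral_nonneg measurableSet_Ioc
        (fun x hx => hαnn x ⟨hu.trans hx.1.le, hx.2.trans hvt⟩)
    simp only [hA, integral_Icc_eq_integral_Ioc]
    rw [← h1, setIntegral_union (Ioc_disjoint_Ioc_of_le le_rfl) measurableSet_Ioc h2 h3]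
    linarith
  have hcontA : ContinuousOn A (Icc 0 t₀) := intervalIntegral.continuousOn_primitive_Icc hαint
  have hcontE : ContinuousOn (fun x => Real.exp (A x)) (Icc 0 t₀) :=
    Real.continuous_exp.comp_continuousOn hcontA
  have hαe_int : IntegrableOn (fun s => α s * Real.exp (A s)) (Icc 0 t₀) := by
    apply Integrable.mono' (hαint.const_mul (Real.exp (A t₀)))
    · exact hαint.aestronglyMeasurable.mul
        (hcontE.aestronglyMeasurable measurableSet_Icc)
    · filter_upwards [ae_restrict_mem measurableSet_Icc] with s hs
      rw [Real.norm_eq_abs, abs_of_nonneg (mul_nonneg (hαnn s hs) (Real.exp_pos _).le),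
        mul_comm]
      exact mul_le_mul_of_nonneg_right
        (Real.exp_le_exp.2 (hmono s t₀ hs.1 hs.2 le_rfl)) (hαnn s hs)
  have hEpos : (0:ℝ) < Real.exp (A t₀) := Real.exp_pos _
  suffices H : ∀ ε > 0, h t₀ ≤ (c + ε) * Real.exp (A t₀) by
    apply le_of_forall_pos_le_add
    intro ε' hε'
    have h1 := H (ε' / Real.exp (A t₀)) (div_pos hε' hEpos)
    have h2 : (c + ε' / Real.exp (A t₀)) * Real.exp (A t₀)
        = c * Real.exp (A t₀) + ε' := by
      field_simp
    linarith
  intro ε hε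
  by_contra hcon
  push_neg at hcon
  set S : Set ℝ := Icc 0 t₀ ∩ {u | (c + ε) * Real.exp (A u) ≤ h u} with hS
  have hSne : S.Nonempty := ⟨t₀, ⟨⟨ht₀, le_rfl⟩, hcon.le⟩⟩
  have hSclosed : IsClosed S := by
    have hcS : ContinuousOn (fun u => h u - (c + ε) * Real.exp (A u)) (Icc 0 t₀) :=
      hcont.sub (continuousOn_const.mul hcontE)
    have : S = Icc 0 t₀ ∩ (fun u => h u - (c + ε) * Real.exp (A u)) ⁻¹' (Ici 0) := by
      ext u
      simp only [hS, mem_inter_iff, mem_setOf_eq, mem_preimage, mem_Ici]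
      constructor
      · rintro ⟨h1, h2⟩; exact ⟨h1, by linarith⟩
      · rintro ⟨h1, h2⟩; exact ⟨h1, by linarith⟩
    rw [this]
    exact hcS.preimage_isClosed_of_isClosed isClosed_Icc isClosed_Ici
  have hbdd : BddBelow S := (bddBelow_Icc).mono inter_subset_left
  set m := sInf S with hm
  have hmS : m ∈ S := hSclosed.csInf_mem hSne hbdd
  have hmIcc : m ∈ Icc 0 t₀ := hmS.1
  have hmlt : ∀ u, 0 ≤ u → u < m → h u < (c + ε) * Real.exp (A u) := by
    intro u hu hum
    by_contra hcon2
    push_neg at hcon2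
    have huS : u ∈ S := ⟨⟨hu, hum.le.trans hmIcc.2⟩, hcon2⟩
    exact absurd (csInf_le hbdd huS) (not_le.2 hum)
  have hsubm : Icc (0:ℝ) m ⊆ Icc 0 t₀ := Icc_subset_Icc le_rfl hmIcc.2
  have hae : ∀ᵐ s ∂(volume.restrict (Icc 0 m)),
      α s * h s ≤ (c + ε) * (α s * Real.exp (A s)) := by
    have hnm : ∀ᵐ (s : ℝ) ∂volume, s ∈ ({m}ᶜ : Set ℝ) :=
      compl_mem_ae_iff.2 (measure_singleton m)
    filter_upwards [ae_restrict_mem measurableSet_Icc, ae_restrict_of_ae hnm] with s hs hne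
    have hslt : s < m := lt_of_le_of_ne hs.2 hne
    have hαs : 0 ≤ α s := hαnn s (hsubm hs)
    rw [mul_left_comm]
    exact mul_le_mul_of_nonneg_left (hmlt s hs.1 hslt).le hαs
  have hkey : ∫ s in Icc 0 m, α s * h s
      ≤ (c + ε) * ∫ s in Icc 0 m, α s * Real.exp (A s) := by
    rw [← MeasureTheory.integral_const_mul]
    exact integral_mono_ae (hαh.mono_set hsubm)
      ((hαe_int.mono_set hsubm).const_mul (c + ε)) hae
  have hL2 : ∫ s in Icc 0 m, α s * Real.exp (A s) ≤ Real.exp (A m) - 1 :=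
    exp_integral_bound hmIcc.1 (hαint.mono_set hsubm)
      (fun s hs => hαnn s (hsubm hs))
  have h1 := hle m hmIcc
  have h2 : (c + ε) * Real.exp (A m) ≤ h m := hmS.2
  have h3 : (0:ℝ) < c + ε := by linarith
  have h4 := mul_le_mul_of_nonneg_left hL2 h3.le
  rw [mul_sub, mul_one] at h4
  linarith

theorem gronwall_quadratic_dissipation
    (T : ℝ) (hT : 0 < T) (f f' g' α β : ℝ → ℝ)
    (hf_nonneg : ∀ t ∈ Set.Icc 0 T, 0 ≤ f t)
    (hg'_nonneg : ∀ t ∈ Set.Icc 0 T, 0 ≤ g' t)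
    (hα_nonneg : ∀ t ∈ Set.Icc 0 T, 0 ≤ α t)
    (hβ_nonneg : ∀ t ∈ Set.Icc 0 T, 0 ≤ β t)
    (hf_deriv : ∀ t ∈ Set.Icc 0 T, HasDerivAt f (f' t) t)
    (hf_bdd : BddAbove (f '' Set.Icc 0 T))
    (hg'_L2 : IntegrableOn (fun t => (g' t) ^ 2) (Set.Icc 0 T))
    (hα_L1 : IntegrableOn α (Set.Icc 0 T))
    (hβ_L2 : IntegrableOn (fun t => t * (β t) ^ 2) (Set.Icc 0 T))
    (hineq : ∀ᵐ t ∂(volume.restrict (Set.Icc 0 T)),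
      f' t + (g' t) ^ 2 ≤ α t * f t + β t * g' t * ∫ s in Set.Icc 0 t, g' s) :
    ∀ t ∈ Set.Icc 0 T,
      (Real.exp (-∫ s in Set.Icc 0 t, α s) - 1 / 2
          - (1 / 2) * ∫ s in Set.Icc 0 t, s * (β s) ^ 2)
        * (∫ s in Set.Icc 0 t, (g' s) ^ 2)
      + Real.exp (-∫ s in Set.Icc 0 t, α s) * f t ≤ f 0 := by
  classical
  intro t₀ ht₀
  set gg : ℝ → ℝ := fun x => ∫ s in Icc 0 x, g' s with hgg
  set G2 : ℝ → ℝ := fun x => ∫ s in Icc 0 x, g' s ^ 2 with hG2def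
  set B : ℝ → ℝ := fun x => ∫ s in Icc 0 x, s * β s ^ 2 with hBdef
  set A : ℝ → ℝ := fun x => ∫ s in Icc 0 x, α s with hAdef
  show (Real.exp (-A t₀) - 1 / 2 - (1 / 2) * B t₀) * G2 t₀
      + Real.exp (-A t₀) * f t₀ ≤ f 0
  obtain ⟨M, hM⟩ := hf_bdd
  have hfM : ∀ x ∈ Icc (0:ℝ) T, f x ≤ M := fun x hx => hM ⟨x, hx, rfl⟩
  -- measurability of g' and β
  have hg'_meas : AEStronglyMeasurable g' (volume.restrict (Icc 0 T)) := by
    apply AEStronglyMeasurable.congr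
      (Real.continuous_sqrt.comp_aestronglyMeasurable hg'_L2.aestronglyMeasurable)
    filter_upwards [ae_restrict_mem measurableSet_Icc] with s hs
    simp [Real.sqrt_sq (hg'_nonneg s hs)]
  have hβ_meas : AEStronglyMeasurable β (volume.restrict (Icc 0 T)) := by
    have h1 : AEStronglyMeasurable (fun t => Real.sqrt ((t * β t ^ 2) * t⁻¹))
        (volume.restrict (Icc 0 T)) := by
      apply Continuous.comp_aestronglyMeasurable Real.continuous_sqrt
      exact hβ_L2.aestronglyMeasurable.mul
        ((measurable_id.inv).aestronglyMeasurable.restrict)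
    apply h1.congr
    have hne : ∀ᵐ (s : ℝ) ∂volume, s ∈ ({(0:ℝ)}ᶜ : Set ℝ) :=
      compl_mem_ae_iff.2 (measure_singleton 0)
    filter_upwards [ae_restrict_mem measurableSet_Icc, ae_restrict_of_ae hne] with s hs hs0
    have hs0' : s ≠ 0 := hs0
    have he : s * β s ^ 2 * s⁻¹ = β s ^ 2 := by
      field_simp
    rw [he, Real.sqrt_sq (hβ_nonneg s hs)]
  -- integrability of g'
  have hcint : IntegrableOn (fun _ : ℝ => (1:ℝ)) (Icc 0 T) :=
    integrableOn_const isCompact_Icc.measure_lt_top.ne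
  have hg'_int : IntegrableOn g' (Icc 0 T) := by
    apply Integrable.mono' (hcint.add hg'_L2)
    · exact hg'_meas
    · filter_upwards [ae_restrict_mem measurableSet_Icc] with s hs
      have h1 := hg'_nonneg s hs
      rw [Real.norm_eq_abs, abs_of_nonneg h1]
      simp only [Pi.add_apply]
      nlinarith [sq_nonneg (g' s - 1)]
  -- continuity
  have hf_cont : ContinuousOn f (Icc 0 T) :=
    fun x hx => (hf_deriv x hx).continuousAt.continuousWithinAt
  have hgg_cont : ContinuousOn gg (Icc 0 T) :=
    intervalIntegral.continuousOn_primitive_Icc hg'_int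
  have hG2_cont : ContinuousOn G2 (Icc 0 T) :=
    intervalIntegral.continuousOn_primitive_Icc hg'_L2
  -- nonnegativity
  have hgg_nn : ∀ x ∈ Icc (0:ℝ) T, 0 ≤ gg x := fun x hx =>
    setIntegral_nonneg measurableSet_Icc (fun u hu => hg'_nonneg u ⟨hu.1, hu.2.trans hx.2⟩)
  have hG2_nn : ∀ x : ℝ, 0 ≤ G2 x := fun x =>
    setIntegral_nonneg measurableSet_Icc (fun u _ => sq_nonneg _)
  have hB_nn : ∀ x ∈ Icc (0:ℝ) T, 0 ≤ B x := fun x hx =>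
    setIntegral_nonneg measurableSet_Icc (fun u hu => mul_nonneg hu.1 (sq_nonneg _))
  have hG2T : ∀ s ∈ Icc (0:ℝ) T, G2 s ≤ G2 T := fun s hs =>
    primitive_mono hg'_L2 (fun u _ => sq_nonneg _) hs.1 hs.2 le_rfl
  -- Cauchy-Schwarz
  have hcs : ∀ s ∈ Icc (0:ℝ) T, gg s ^ 2 ≤ s * G2 s := fun s hs =>
    cs_bound hs.1 (hg'_int.mono_set (Icc_subset_Icc le_rfl hs.2))
      (hg'_L2.mono_set (Icc_subset_Icc le_rfl hs.2))
      (fun u hu => hg'_nonneg u ⟨hu.1, hu.2.trans hs.2⟩)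
  -- pointwise bound for β * g' * gg with a parameter K ≥ G2 s
  have hpt : ∀ K : ℝ, ∀ s ∈ Icc (0:ℝ) T, G2 s ≤ K →
      β s * g' s * gg s ≤ (1/2) * g' s ^ 2 + (K / 2) * (s * β s ^ 2) := by
    intro K s hs hK
    have h1 : gg s ^ 2 ≤ s * K :=
      (hcs s hs).trans (mul_le_mul_of_nonneg_left hK hs.1)
    have h2 : 2 * (β s * g' s * gg s) ≤ β s ^ 2 * gg s ^ 2 + g' s ^ 2 := by
      nlinarith [sq_nonneg (β s * gg s - g' s)]
    have h3 : β s ^ 2 * gg s ^ 2 ≤ β s ^ 2 * (s * K) :=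
      mul_le_mul_of_nonneg_left h1 (sq_nonneg _)
    nlinarith [h2, h3]
  -- integrability of products
  have hβgg_int : IntegrableOn (fun s => β s * g' s * gg s) (Icc 0 T) := by
    apply Integrable.mono' ((hg'_L2.const_mul (1/2)).add (hβ_L2.const_mul (G2 T / 2)))
    · exact (hβ_meas.mul hg'_meas).mul (hgg_cont.aestronglyMeasurable measurableSet_Icc)
    · filter_upwards [ae_restrict_mem measurableSet_Icc] with s hs
      have hnn' : 0 ≤ β s * g' s * gg s :=
        mul_nonneg (mul_nonneg (hβ_nonneg s hs) (hg'_nonneg s hs)) (hgg_nn s hs)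
      rw [Real.norm_eq_abs, abs_of_nonneg hnn']
      simp only [Pi.add_apply]
      exact hpt (G2 T) s hs (hG2T s hs)
  have hαf_int : IntegrableOn (fun s => α s * f s) (Icc 0 T) := by
    apply Integrable.mono' (hα_L1.const_mul M)
    · exact hα_L1.aestronglyMeasurable.mul (hf_cont.aestronglyMeasurable measurableSet_Icc)
    · filter_upwards [ae_restrict_mem measurableSet_Icc] with s hs
      rw [Real.norm_eq_abs, abs_of_nonneg (mul_nonneg (hα_nonneg s hs) (hf_nonneg s hs)),
        mul_comm]
      exact mul_le_mul_of_nonneg_right (hfM s hs) (hα_nonneg s hs)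
  have hαh_int : IntegrableOn (fun s => α s * (f s + G2 s)) (Icc 0 T) := by
    apply Integrable.mono' (hα_L1.const_mul (M + G2 T))
    · exact hα_L1.aestronglyMeasurable.mul
        ((hf_cont.add hG2_cont).aestronglyMeasurable measurableSet_Icc)
    · filter_upwards [ae_restrict_mem measurableSet_Icc] with s hs
      have hfs := hf_nonneg s hs
      have h2 := hG2T s hs
      rw [Real.norm_eq_abs,
        abs_of_nonneg (mul_nonneg (hα_nonneg s hs) (by linarith [hG2_nn s])), mul_comm]
      exact mul_le_mul_of_nonneg_right (by linarith [hfM s hs]) (hα_nonneg s hs)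
  -- Step B : integrated differential inequality
  have stepB : ∀ t ∈ Icc (0:ℝ) T,
      f t + G2 t ≤ f 0 + (∫ s in Icc 0 t, α s * f s) + ∫ s in Icc 0 t, β s * g' s * gg s := by
    intro t ht
    set φ : ℝ → ℝ := fun x => α x * f x + β x * g' x * gg x - g' x ^ 2 with hφ
    set φt : ℝ → ℝ := fun x =>
      if f' x + g' x ^ 2 ≤ α x * f x + β x * g' x * gg x then φ x else f' x with hφt
    have hsub : Icc (0:ℝ) t ⊆ Icc 0 T := Icc_subset_Icc le_rfl ht.2
    have hsum_intT : IntegrableOn (fun y => α y * f y + β y * g' y * gg y) (Icc 0 T) :=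
      hαf_int.add hβgg_int
    have hsum_int : IntegrableOn (fun y => α y * f y + β y * g' y * gg y) (Icc 0 t) :=
      hsum_intT.mono_set hsub
    have hφ_int : IntegrableOn φ (Icc 0 t) := hsum_int.sub (hg'_L2.mono_set hsub)
    have hae : φt =ᵐ[volume.restrict (Icc 0 t)] φ := by
      filter_upwards [ae_restrict_of_ae_restrict_of_subset hsub hineq] with x hx
      simp only [hφt]
      rw [if_pos hx]
    have hφt_int : IntegrableOn φt (Icc 0 t) := hφ_int.congr hae.symm
    have hd : ∀ x ∈ Ioo (0:ℝ) t, HasDerivWithinAt f (f' x) (Ioi x) x :=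
      fun x hx => (hf_deriv x ⟨hx.1.le, hx.2.le.trans ht.2⟩).hasDerivWithinAt
    have hpt' : ∀ x ∈ Ioo (0:ℝ) t, f' x ≤ φt x := by
      intro x _
      by_cases hE : f' x + g' x ^ 2 ≤ α x * f x + β x * g' x * gg x
      · simp only [hφt, hφ]
        rw [if_pos hE]
        linarith
      · simp only [hφt]
        rw [if_neg hE]
    have key := intervalIntegral.sub_le_integral_of_hasDeriv_right_of_le ht.1
      (hf_cont.mono hsub) hd hφt_int hpt'
    have h2 : ∫ y in (0:ℝ)..t, φt y = ∫ y in Icc 0 t, φ y := by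
      rw [intervalIntegral.integral_of_le ht.1, integral_Icc_eq_integral_Ioc]
      exact integral_congr_ae (ae_restrict_of_ae_restrict_of_subset Ioc_subset_Icc_self hae)
    have h3 : ∫ y in Icc 0 t, φ y
        = (∫ s in Icc 0 t, α s * f s) + (∫ s in Icc 0 t, β s * g' s * gg s) - G2 t := by
      simp only [hφ]
      rw [integral_sub hsum_int (hg'_L2.mono_set hsub),
        integral_add (hαf_int.mono_set hsub) (hβgg_int.mono_set hsub)]
      try rfl
    rw [h2, h3] at key
    linarith
  -- constant for Gronwall
  set c : ℝ := f 0 + (1/2) * (1 + B t₀) * G2 t₀ with hcdef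
  have hf0 : 0 ≤ f 0 := hf_nonneg 0 ⟨le_rfl, hT.le⟩
  have hBt₀ : 0 ≤ B t₀ := hB_nn t₀ ht₀
  have hG2t₀ : 0 ≤ G2 t₀ := hG2_nn t₀
  have hcnn : 0 ≤ c := by
    have : 0 ≤ (1/2) * (1 + B t₀) * G2 t₀ :=
      mul_nonneg (mul_nonneg (by norm_num) (by linarith)) hG2t₀
    rw [hcdef]; linarith
  have hle : ∀ t ∈ Icc (0:ℝ) t₀,
      f t + G2 t ≤ c + ∫ s in Icc 0 t, α s * (f s + G2 s) := by
    intro t ht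
    have htT : t ∈ Icc (0:ℝ) T := ⟨ht.1, ht.2.trans ht₀.2⟩
    have hsubt : Icc (0:ℝ) t ⊆ Icc 0 T := Icc_subset_Icc le_rfl htT.2
    have hb := stepB t htT
    have hG2mono : ∀ s ∈ Icc (0:ℝ) t, G2 s ≤ G2 t₀ := fun s hs =>
      primitive_mono hg'_L2 (fun u _ => sq_nonneg _) hs.1 (hs.2.trans ht.2) ht₀.2
    have hRint : IntegrableOn
        (fun s => (1/2) * g' s ^ 2 + (G2 t₀ / 2) * (s * β s ^ 2)) (Icc 0 t) :=
      ((hg'_L2.mono_set hsubt).const_mul (1/2)).add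
        ((hβ_L2.mono_set hsubt).const_mul (G2 t₀ / 2))
    have hβb : ∫ s in Icc 0 t, β s * g' s * gg s ≤ (1/2) * G2 t + (G2 t₀ / 2) * B t := by
      have hmono1 : ∫ s in Icc 0 t, β s * g' s * gg s
          ≤ ∫ s in Icc 0 t, ((1/2) * g' s ^ 2 + (G2 t₀ / 2) * (s * β s ^ 2)) := by
        apply setIntegral_mono_on (hβgg_int.mono_set hsubt) hRint measurableSet_Icc
        intro s hs
        exact hpt (G2 t₀) s (hsubt hs) (hG2mono s hs)
      have he : ∫ s in Icc 0 t, ((1/2) * g' s ^ 2 + (G2 t₀ / 2) * (s * β s ^ 2))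
          = (1/2) * G2 t + (G2 t₀ / 2) * B t := by
        rw [integral_add ((hg'_L2.mono_set hsubt).const_mul (1/2))
          ((hβ_L2.mono_set hsubt).const_mul (G2 t₀ / 2)),
          MeasureTheory.integral_const_mul, MeasureTheory.integral_const_mul]
      linarith
    have hG2tm : G2 t ≤ G2 t₀ :=
      primitive_mono hg'_L2 (fun u _ => sq_nonneg _) ht.1 ht.2 ht₀.2
    have hBtm : B t ≤ B t₀ :=
      primitive_mono hβ_L2 (fun u hu => mul_nonneg hu.1 (sq_nonneg _)) ht.1 ht.2 ht₀.2
    have hαff : ∫ s in Icc 0 t, α s * f s ≤ ∫ s in Icc 0 t, α s * (f s + G2 s) := by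
      apply setIntegral_mono_on (hαf_int.mono_set hsubt) (hαh_int.mono_set hsubt)
        measurableSet_Icc
      intro s hs
      exact mul_le_mul_of_nonneg_left (by linarith [hG2_nn s]) (hα_nonneg s (hsubt hs))
    have hcomb : (1/2) * G2 t + (G2 t₀ / 2) * B t ≤ (1/2) * (1 + B t₀) * G2 t₀ := by
      nlinarith [hG2tm, hBtm, hG2t₀, hBt₀, hB_nn t htT]
    rw [hcdef]
    linarith
  -- apply Gronwall
  have hmain : f t₀ + G2 t₀ ≤ c * Real.exp (A t₀) := by
    have := gronwall_const (h := fun x => f x + G2 x) (α := α) ht₀.1 hcnn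
      ((hf_cont.add hG2_cont).mono (Icc_subset_Icc le_rfl ht₀.2))
      (hα_L1.mono_set (Icc_subset_Icc le_rfl ht₀.2))
      (fun s hs => hα_nonneg s ⟨hs.1, hs.2.trans ht₀.2⟩)
      (hαh_int.mono_set (Icc_subset_Icc le_rfl ht₀.2))
      hle
    exact this
  -- final algebra
  have hEpos : (0:ℝ) < Real.exp (-A t₀) := Real.exp_pos _
  have hEmul : Real.exp (-A t₀) * Real.exp (A t₀) = 1 := by
    rw [← Real.exp_add]; simp
  have h5 := mul_le_mul_of_nonneg_left hmain hEpos.le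
  have h6 : Real.exp (-A t₀) * (c * Real.exp (A t₀)) = c := by
    rw [mul_left_comm, hEmul, mul_one]
  rw [h6, hcdef] at h5
  nlinarith [h5]
end

section
/- Special case of the generalized Gronwall lemma: under the hypotheses of the previous lemma, if moreover e^{−∫₀ᵗ α(s) ds} − 1/2 − (1/2)∫₀ᵗ s β(s)² ds > 0 for all t ∈ [0,T] and f(0) = 0, then f ≡ 0 and g' = 0 a.e. on [0,T]. -/
open MeasureTheory

theorem gronwall_quadratic_dissipation_uniqueness
    (T : ℝ) (hT : 0 < T) (f f' g' α β : ℝ → ℝ)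
    (hf_nonneg : ∀ t ∈ Set.Icc 0 T, 0 ≤ f t)
    (hg'_nonneg : ∀ t ∈ Set.Icc 0 T, 0 ≤ g' t)
    (hα_nonneg : ∀ t ∈ Set.Icc 0 T, 0 ≤ α t)
    (hβ_nonneg : ∀ t ∈ Set.Icc 0 T, 0 ≤ β t)
    (hf_deriv : ∀ t ∈ Set.Icc 0 T, HasDerivAt f (f' t) t)
    (hf_bdd : BddAbove (f '' Set.Icc 0 T))
    (hg'_L2 : IntegrableOn (fun t => (g' t) ^ 2) (Set.Icc 0 T))
    (hα_L1 : IntegrableOn α (Set.Icc 0 T))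
    (hβ_L2 : IntegrableOn (fun t => t * (β t) ^ 2) (Set.Icc 0 T))
    (hineq : ∀ᵐ t ∂(volume.restrict (Set.Icc 0 T)),
      f' t + (g' t) ^ 2 ≤ α t * f t + β t * g' t * ∫ s in Set.Icc 0 t, g' s)
    (hpos : ∀ t ∈ Set.Icc 0 T,
      0 < Real.exp (-∫ s in Set.Icc 0 t, α s) - 1 / 2
          - (1 / 2) * ∫ s in Set.Icc 0 t, s * (β s) ^ 2)
    (hf0 : f 0 = 0) :
    (∀ t ∈ Set.Icc 0 T, f t = 0) ∧
      (∀ᵐ t ∂(volume.restrict (Set.Icc 0 T)), g' t = 0) := by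
  have hTT : T ∈ Set.Icc (0:ℝ) T := ⟨hT.le, le_rfl⟩
  have h0T : (0:ℝ) ∈ Set.Icc (0:ℝ) T := ⟨le_rfl, hT.le⟩
  have hsub : ∀ t ∈ Set.Icc (0:ℝ) T, Set.Icc (0:ℝ) t ⊆ Set.Icc (0:ℝ) T :=
    fun t ht => Set.Icc_subset_Icc le_rfl ht.2
  -- abbreviations
  have hq_nonneg : (0:ℝ) ≤ ∫ s in Set.Icc (0:ℝ) T, (g' s) ^ 2 :=
    integral_nonneg fun x => sq_nonneg _
  have hA_nonneg : (0:ℝ) ≤ ∫ s in Set.Icc (0:ℝ) T, α s :=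
    setIntegral_nonneg measurableSet_Icc fun x hx => hα_nonneg x hx
  have hB_nonneg : (0:ℝ) ≤ ∫ s in Set.Icc (0:ℝ) T, s * (β s) ^ 2 :=
    setIntegral_nonneg measurableSet_Icc fun x hx => mul_nonneg hx.1 (sq_nonneg _)
  -- measurability and integrability of g'
  have hg'_meas : AEStronglyMeasurable g' (volume.restrict (Set.Icc 0 T)) := by
    have h2 : (fun x => Real.sqrt ((g' x) ^ 2)) =ᵐ[volume.restrict (Set.Icc (0:ℝ) T)] g' := by
      filter_upwards [ae_restrict_mem measurableSet_Icc] with x hx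
      rw [Real.sqrt_sq (hg'_nonneg x hx)]
    exact (Real.continuous_sqrt.comp_aestronglyMeasurable hg'_L2.aestronglyMeasurable).congr h2
  have hg'_int : IntegrableOn g' (Set.Icc 0 T) := by
    have hconst : IntegrableOn (fun _ : ℝ => (1:ℝ)) (Set.Icc (0:ℝ) T) :=
      integrableOn_const measure_Icc_lt_top.ne
    refine Integrable.mono (hg'_L2.add hconst) hg'_meas ?_
    filter_upwards with x
    have h1 : |g' x| ≤ (g' x) ^ 2 + 1 := by nlinarith [sq_nonneg (|g' x| - 1), sq_abs (g' x)]
    have h2 : (0:ℝ) ≤ (g' x) ^ 2 + 1 := by positivity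
    simpa [Real.norm_eq_abs, abs_of_nonneg h2] using h1
  -- monotonicity of the L² integral
  have hQ_nonneg : ∀ t : ℝ, (0:ℝ) ≤ ∫ s in Set.Icc (0:ℝ) t, (g' s) ^ 2 :=
    fun t => integral_nonneg fun x => sq_nonneg _
  have hQ_le : ∀ t ∈ Set.Icc (0:ℝ) T,
      (∫ s in Set.Icc (0:ℝ) t, (g' s) ^ 2) ≤ ∫ s in Set.Icc (0:ℝ) T, (g' s) ^ 2 := by
    intro t ht
    exact setIntegral_mono_set hg'_L2 (Filter.Eventually.of_forall fun x => sq_nonneg _)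
      (HasSubset.Subset.eventuallyLE (hsub t ht))
  -- Cauchy–Schwarz
  have hCS : ∀ s ∈ Set.Icc (0:ℝ) T,
      (∫ u in Set.Icc (0:ℝ) s, g' u) ^ 2 ≤ s * ∫ u in Set.Icc (0:ℝ) T, (g' u) ^ 2 := by
    intro s hs
    rcases eq_or_lt_of_le hs.1 with h0 | h0
    · have hz : volume.restrict (Set.Icc (0:ℝ) 0) = 0 := by
        rw [Measure.restrict_eq_zero]
        simp [Set.Icc_self]
      rw [← h0]
      simp [hz]
    · set G := ∫ u in Set.Icc (0:ℝ) s, g' u with hG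
      set c : ℝ := G / s with hcdef
      have hc : c * s = G := div_mul_cancel₀ G h0.ne'
      have hint2 : IntegrableOn (fun u => (g' u) ^ 2) (Set.Icc 0 s) := hg'_L2.mono_set (hsub s hs)
      have hint1 : IntegrableOn g' (Set.Icc 0 s) := hg'_int.mono_set (hsub s hs)
      have hvol : (volume (Set.Icc (0:ℝ) s)).toReal = s := by
        rw [Real.volume_Icc]
        rw [ENNReal.toReal_ofReal (by linarith)]
        ring
      have key : (0:ℝ) ≤ ∫ u in Set.Icc (0:ℝ) s, (g' u - c) ^ 2 :=
        integral_nonneg fun x => sq_nonneg _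
      have expand : ∫ u in Set.Icc (0:ℝ) s, (g' u - c) ^ 2
          = (∫ u in Set.Icc (0:ℝ) s, (g' u) ^ 2) - (2 * c) * G + c ^ 2 * s := by
        have heq : (fun u => (g' u - c) ^ 2)
            = fun u => ((g' u) ^ 2 - (2 * c) * g' u) + c ^ 2 := by
          funext u; ring
        have i3 : IntegrableOn (fun u => (2 * c) * g' u) (Set.Icc (0:ℝ) s) :=
          hint1.const_mul _
        have i1 : IntegrableOn (fun u => (g' u) ^ 2 - (2 * c) * g' u) (Set.Icc (0:ℝ) s) :=
          hint2.sub i3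
        have i2 : IntegrableOn (fun _ : ℝ => c ^ 2) (Set.Icc (0:ℝ) s) :=
          integrableOn_const measure_Icc_lt_top.ne
        rw [heq, integral_add i1 i2, integral_sub hint2 i3, integral_const_mul, integral_const,
          measureReal_restrict_apply_univ, measureReal_def, hvol, ← hG, smul_eq_mul]
        ring
      have hQs := hQ_le s hs
      nlinarith [mul_nonneg h0.le (expand ▸ key), mul_le_mul_of_nonneg_left hQs h0.le,
        sq_nonneg G]
  -- continuity and boundedness of f
  have hf_cont : ContinuousOn f (Set.Icc 0 T) :=
    fun t ht => ((hf_deriv t ht).continuousAt).continuousWithinAt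
  have hfa : ∀ t ∈ Set.Icc (0:ℝ) T, f t ≤ sSup (f '' Set.Icc 0 T) :=
    fun t ht => le_csSup hf_bdd ⟨t, ht, rfl⟩
  have ha0 : (0:ℝ) ≤ sSup (f '' Set.Icc 0 T) := by
    have := hfa 0 h0T; rwa [hf0] at this
  -- the integrable majorant φ
  set q : ℝ := ∫ s in Set.Icc (0:ℝ) T, (g' s) ^ 2 with hqdef
  set φ : ℝ → ℝ := fun s => α s * f s - (1/2) * (g' s) ^ 2 + (q/2) * (s * (β s) ^ 2) with hφdef
  have hαf_int : IntegrableOn (fun s => α s * f s) (Set.Icc 0 T) := by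
    have hmeas : AEStronglyMeasurable (fun s => α s * f s) (volume.restrict (Set.Icc 0 T)) :=
      hα_L1.aestronglyMeasurable.mul (hf_cont.aestronglyMeasurable measurableSet_Icc)
    refine Integrable.mono' (hα_L1.const_mul (sSup (f '' Set.Icc 0 T))) hmeas ?_
    filter_upwards [ae_restrict_mem measurableSet_Icc] with x hx
    have h1 := hα_nonneg x hx
    have h2 := hf_nonneg x hx
    have h3 := hfa x hx
    rw [Real.norm_eq_abs, abs_of_nonneg (mul_nonneg h1 h2)]
    nlinarith
  have hφ_int : IntegrableOn φ (Set.Icc 0 T) :=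
    (hαf_int.sub (hg'_L2.const_mul (1/2))).add (hβ_L2.const_mul (q/2))
  -- a.e. differential inequality with φ
  have hφ_ae : ∀ᵐ s ∂(volume.restrict (Set.Icc (0:ℝ) T)), f' s ≤ φ s := by
    filter_upwards [hineq, ae_restrict_mem measurableSet_Icc] with s hs hsm
    have hG2 : (∫ u in Set.Icc (0:ℝ) s, g' u) ^ 2 ≤ s * q := hCS s hsm
    set G := ∫ u in Set.Icc (0:ℝ) s, g' u with hG
    have h2ab : 2 * g' s * (β s * G) ≤ (g' s) ^ 2 + (β s * G) ^ 2 :=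
      two_mul_le_add_sq (g' s) (β s * G)
    have hβ2 : (β s) ^ 2 * G ^ 2 ≤ (β s) ^ 2 * (s * q) :=
      mul_le_mul_of_nonneg_left hG2 (sq_nonneg _)
    show f' s ≤ α s * f s - (1/2) * (g' s) ^ 2 + (q/2) * (s * (β s) ^ 2)
    nlinarith [hs]
  -- main Gronwall-type estimate
  have hmain : ∀ t ∈ Set.Icc (0:ℝ) T,
      f t + (1/2) * (∫ s in Set.Icc (0:ℝ) t, (g' s) ^ 2)
        ≤ (∫ s in Set.Icc (0:ℝ) T, α s) * sSup (f '' Set.Icc 0 T)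
          + ((∫ s in Set.Icc (0:ℝ) T, s * (β s) ^ 2) / 2) * q := by
    intro t ht
    set ψ : ℝ → ℝ := fun x => max (φ x) (f' x) with hψdef
    have hψφ : ψ =ᵐ[volume.restrict (Set.Icc (0:ℝ) t)] φ := by
      filter_upwards [ae_restrict_of_ae_restrict_of_subset (hsub t ht) hφ_ae] with x hx
      exact max_eq_left hx
    have hψ_int : IntegrableOn ψ (Set.Icc 0 t) := (hφ_int.mono_set (hsub t ht)).congr hψφ.symm
    have step := intervalIntegral.sub_le_integral_of_hasDeriv_right_of_le ht.1
      (hf_cont.mono (hsub t ht))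
      (fun x hx => (hf_deriv x ⟨hx.1.le, hx.2.le.trans ht.2⟩).hasDerivWithinAt)
      hψ_int (fun x _ => le_max_right _ _)
    have e0 : (∫ y in (0:ℝ)..t, ψ y) = ∫ y in Set.Icc (0:ℝ) t, φ y := by
      rw [intervalIntegral.integral_of_le ht.1, ← integral_Icc_eq_integral_Ioc]
      exact integral_congr_ae hψφ
    have hsplit : (∫ y in Set.Icc (0:ℝ) t, φ y)
        = (∫ y in Set.Icc (0:ℝ) t, α y * f y)
          - (1/2) * (∫ y in Set.Icc (0:ℝ) t, (g' y) ^ 2)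
          + (q/2) * ∫ y in Set.Icc (0:ℝ) t, y * (β y) ^ 2 := by
      have j0 : IntegrableOn (fun y => α y * f y) (Set.Icc (0:ℝ) t) :=
        hαf_int.mono_set (hsub t ht)
      have j1 : IntegrableOn (fun y => (1/2 : ℝ) * (g' y) ^ 2) (Set.Icc (0:ℝ) t) :=
        (hg'_L2.mono_set (hsub t ht)).const_mul _
      have j2 : IntegrableOn (fun y => α y * f y - (1/2) * (g' y) ^ 2) (Set.Icc (0:ℝ) t) :=
        j0.sub j1
      have j3 : IntegrableOn (fun y => (q/2) * (y * (β y) ^ 2)) (Set.Icc (0:ℝ) t) :=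
        (hβ_L2.mono_set (hsub t ht)).const_mul _
      rw [hφdef]
      rw [integral_add j2 j3, integral_sub j0 j1, integral_const_mul, integral_const_mul]
    have b1 : (∫ y in Set.Icc (0:ℝ) t, α y * f y)
        ≤ (∫ s in Set.Icc (0:ℝ) T, α s) * sSup (f '' Set.Icc 0 T) := by
      have step1 : (∫ y in Set.Icc (0:ℝ) t, α y * f y)
          ≤ ∫ y in Set.Icc (0:ℝ) t, α y * sSup (f '' Set.Icc 0 T) := by
        refine setIntegral_mono_on (hαf_int.mono_set (hsub t ht))
          ((hα_L1.mono_set (hsub t ht)).mul_const _) measurableSet_Icc ?_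
        intro x hx
        exact mul_le_mul_of_nonneg_left (hfa x (hsub t ht hx)) (hα_nonneg x (hsub t ht hx))
      have step2 : (∫ y in Set.Icc (0:ℝ) t, α y * sSup (f '' Set.Icc 0 T))
          = (∫ y in Set.Icc (0:ℝ) t, α y) * sSup (f '' Set.Icc 0 T) := integral_mul_const _ _
      have step3 : (∫ y in Set.Icc (0:ℝ) t, α y) ≤ ∫ s in Set.Icc (0:ℝ) T, α s := by
        refine setIntegral_mono_set hα_L1 ?_ (HasSubset.Subset.eventuallyLE (hsub t ht))
        filter_upwards [ae_restrict_mem measurableSet_Icc] with x hx using hα_nonneg x hx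
      calc (∫ y in Set.Icc (0:ℝ) t, α y * f y)
          ≤ (∫ y in Set.Icc (0:ℝ) t, α y) * sSup (f '' Set.Icc 0 T) := step2 ▸ step1
        _ ≤ (∫ s in Set.Icc (0:ℝ) T, α s) * sSup (f '' Set.Icc 0 T) :=
            mul_le_mul_of_nonneg_right step3 ha0
    have b2 : (∫ y in Set.Icc (0:ℝ) t, y * (β y) ^ 2)
        ≤ ∫ s in Set.Icc (0:ℝ) T, s * (β s) ^ 2 := by
      refine setIntegral_mono_set hβ_L2 ?_ (HasSubset.Subset.eventuallyLE (hsub t ht))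
      filter_upwards [ae_restrict_mem measurableSet_Icc] with x hx
      exact mul_nonneg hx.1 (sq_nonneg _)
    have hq2 : (0:ℝ) ≤ q/2 := by positivity
    have b2' := mul_le_mul_of_nonneg_left b2 hq2
    rw [e0, hsplit, hf0] at step
    linarith
  -- contraction constants
  have hexp := hpos T hTT
  have h1A := Real.add_one_le_exp (∫ s in Set.Icc (0:ℝ) T, α s)
  have hEpos := Real.exp_pos (∫ s in Set.Icc (0:ℝ) T, α s)
  have hAB : (∫ s in Set.Icc (0:ℝ) T, α s) + (∫ s in Set.Icc (0:ℝ) T, s * (β s) ^ 2) < 1 := by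
    set A := ∫ s in Set.Icc (0:ℝ) T, α s
    set B := ∫ s in Set.Icc (0:ℝ) T, s * (β s) ^ 2
    rw [Real.exp_neg] at hexp
    have h2 : (1 + B) / 2 < (Real.exp A)⁻¹ := by linarith
    have h3 : (1 + B) / 2 * Real.exp A < 1 := by
      calc (1 + B) / 2 * Real.exp A < (Real.exp A)⁻¹ * Real.exp A :=
            mul_lt_mul_of_pos_right h2 hEpos
        _ = 1 := inv_mul_cancel₀ hEpos.ne'
    nlinarith [mul_le_mul_of_nonneg_left h1A (by linarith : (0:ℝ) ≤ (1 + B) / 2)]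
  -- conclude a = 0 and q = 0
  set A := ∫ s in Set.Icc (0:ℝ) T, α s
  set B := ∫ s in Set.Icc (0:ℝ) T, s * (β s) ^ 2
  set a := sSup (f '' Set.Icc 0 T)
  have hAa : a ≤ A * a + (B/2) * q := by
    refine csSup_le (Set.Nonempty.image f ⟨0, h0T⟩) ?_
    rintro y ⟨t, ht, rfl⟩
    have h1 := hmain t ht
    have h2 := hQ_nonneg t
    linarith
  have hqq : q/2 ≤ A * a + (B/2) * q := by
    have h1 := hmain T hTT
    have h2 := hf_nonneg T hTT
    rw [← hqdef] at h1
    linarith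
  have hca : a ≤ max a (q/2) := le_max_left _ _
  have hcq : q/2 ≤ max a (q/2) := le_max_right _ _
  have hc0 : (0:ℝ) ≤ max a (q/2) := ha0.trans hca
  have h1 : a ≤ (A + B) * max a (q/2) := by
    nlinarith [mul_le_mul_of_nonneg_left hca hA_nonneg, mul_le_mul_of_nonneg_left hcq hB_nonneg]
  have h2 : q/2 ≤ (A + B) * max a (q/2) := by
    nlinarith [mul_le_mul_of_nonneg_left hca hA_nonneg, mul_le_mul_of_nonneg_left hcq hB_nonneg]
  have hcc : max a (q/2) ≤ (A + B) * max a (q/2) := max_le h1 h2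
  have hcz : max a (q/2) ≤ 0 := by nlinarith
  have ha_eq : a = 0 := le_antisymm (hca.trans hcz) ha0
  have hq_eq : q = 0 := le_antisymm (by linarith [hcq.trans hcz]) hq_nonneg
  constructor
  · intro t ht
    exact le_antisymm (ha_eq ▸ hfa t ht) (hf_nonneg t ht)
  · have hzero : (fun t => (g' t) ^ 2) =ᵐ[volume.restrict (Set.Icc (0:ℝ) T)] 0 :=
      (integral_eq_zero_iff_of_nonneg_ae (Filter.Eventually.of_forall fun x => sq_nonneg _)
        hg'_L2).mp hq_eq
    filter_upwards [hzero] with x hx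
    exact pow_eq_zero_iff two_ne_zero |>.mp hx
end

section
/- L^γ control of large densities by relative entropy: let γ ≥ 2, and let ρ, ρ̄ : 𝕋^d → [0,∞) be measurable with ρ̄ ≥ c > 0 and ρ̄ ≤ M. Set R = ρ − ρ̄ and F(ρ̄,R) = (1/γ)ρ^γ − ρ̄^{γ−1}R − (1/γ)ρ̄^γ. Then there is a constant C = C(γ, c, M) such that, pointwise, R² ≤ C F(ρ̄, R) whenever |R| ≤ ρ̄, and R^γ ≤ C F(ρ̄, R) whenever R ≥ ρ̄; consequently ∫_{|R|≤ρ̄} R² dx + ∫_{R≥ρ̄} R^γ dx ≤ C ∫ F(ρ̄, R) dx. -/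
open MeasureTheory RealInnerProductSpace

noncomputable section

abbrev E (d : ℕ) := EuclideanSpace ℝ (Fin d)

/-- Fundamental domain of the torus `𝕋^d = ℝ^d / ℤ^d` (normalized volume 1). -/
def Q (d : ℕ) : Set (E d) := {x | ∀ i, x i ∈ Set.Ico (0 : ℝ) 1}

/-- `ℤ^d`-periodicity: a function on `ℝ^d` descending to the torus. -/
def Per {d : ℕ} {V : Type*} (f : E d → V) : Prop :=
  ∀ (x : E d) (k : Fin d → ℤ),
    f (x + (WithLp.equiv 2 (Fin d → ℝ)).symm fun i => (k i : ℝ)) = f x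

def e (d : ℕ) (i : Fin d) : E d := EuclideanSpace.single i (1 : ℝ)

/-- Divergence of a vector field. -/
def vdiv {d : ℕ} (u : E d → E d) (x : E d) : ℝ :=
  ∑ i, fderiv ℝ u x (e d i) i

/-- Componentwise Laplacian of a vector field. -/
def vlap {d : ℕ} (u : E d → E d) (x : E d) : E d :=
  ∑ i, fderiv ℝ (fun y => fderiv ℝ u y (e d i)) x (e d i)

/-- Squared Frobenius norm of the gradient of a vector field. -/
def gradsq {d : ℕ} (u : E d → E d) (x : E d) : ℝ :=
  ∑ i, ‖fderiv ℝ u x (e d i)‖ ^ 2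

/-! ### Auxiliary elementary inequalities for `φ(t) = t^γ - 1 - γ(t-1)` -/

/-- Bernoulli: `φ(x) ≥ 0` for `x ≥ 0`, `γ ≥ 2`. -/
lemma ecd_phi_nonneg {γ x : ℝ} (hγ : 2 ≤ γ) (hx : 0 ≤ x) :
    1 + γ * (x - 1) ≤ x ^ γ := by
  have h := one_add_mul_self_le_rpow_one_add (by linarith : (-1:ℝ) ≤ x - 1)
    (by linarith : (1:ℝ) ≤ γ)
  have e : 1 + (x - 1) = x := by ring
  rwa [e] at h

lemma ecd_rpow_half_sq {x γ : ℝ} (hx : 0 ≤ x) : (x ^ (γ/2)) ^ 2 = x ^ γ := by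
  rw [← Real.rpow_natCast (x ^ (γ/2)) 2, ← Real.rpow_mul hx]
  norm_num

/-- Quadratic lower bound for `φ` on `[0,2]`. -/
lemma ecd_phi_quad {γ x : ℝ} (hγ : 2 ≤ γ) (hx : 0 ≤ x) (hx2 : x ≤ 2) :
    (x - 1) ^ 2 ≤ x ^ γ - 1 - γ * (x - 1) := by
  have hg2 : (1:ℝ) ≤ γ / 2 := by linarith
  have hsq := ecd_rpow_half_sq (γ := γ) hx
  by_cases h0 : (0:ℝ) ≤ 1 + γ/2 * (x - 1)
  · have hb := one_add_mul_self_le_rpow_one_add (by linarith : (-1:ℝ) ≤ x - 1) hg2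
    have e : 1 + (x - 1) = x := by ring
    rw [e] at hb
    have hsq2 : (1 + γ/2 * (x-1)) ^ 2 ≤ (x ^ (γ/2)) ^ 2 := by
      apply sq_le_sq' (by linarith) hb
    rw [hsq] at hsq2
    nlinarith [sq_nonneg (x - 1), sq_nonneg ((γ - 2) * (x - 1))]
  · push_neg at h0
    have hxγ : (0:ℝ) ≤ x ^ γ := Real.rpow_nonneg hx γ
    nlinarith [mul_nonneg hx (by linarith : (0:ℝ) ≤ 2 - x)]

lemma ecd_two_rpow_big {γ : ℝ} (hγ : 2 ≤ γ) : γ + 1 + γ^2/4 ≤ (2:ℝ) ^ γ := by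
  have hb := one_add_mul_self_le_rpow_one_add (by norm_num : (-1:ℝ) ≤ 1)
    (by linarith : (1:ℝ) ≤ γ / 2)
  have hsq := ecd_rpow_half_sq (x := (2:ℝ)) (γ := γ) (by norm_num)
  have h1 : (1 + γ/2 * 1) ^ 2 ≤ ((2:ℝ) ^ (γ/2)) ^ 2 := by
    apply sq_le_sq' (by nlinarith) (by norm_num at hb ⊢; linarith)
  rw [hsq] at h1
  nlinarith

/-- Power lower bound for `φ` on `[2,∞)`. -/
lemma ecd_phi_pow {γ x : ℝ} (hγ : 2 ≤ γ) (hx : 2 ≤ x) :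
    ((2:ℝ)^γ - (γ + 1)) * (x - 1) ^ γ ≤ (2:ℝ)^γ * (x ^ γ - 1 - γ * (x - 1)) := by
  have hx0 : (0:ℝ) ≤ x := by linarith
  have h2 : 1 + γ * (x/2 - 1) ≤ (x/2) ^ γ := by
    have h := one_add_mul_self_le_rpow_one_add (by linarith : (-1:ℝ) ≤ x/2 - 1)
      (by linarith : (1:ℝ) ≤ γ)
    have e : 1 + (x/2 - 1) = x/2 := by ring
    rwa [e] at h
  have h4 : (x/2) ^ γ = x ^ γ / (2:ℝ) ^ γ := Real.div_rpow hx0 (by norm_num : (0:ℝ) ≤ 2) γ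
  have h6 : (0:ℝ) < (2:ℝ) ^ γ := Real.rpow_pos_of_pos (by norm_num) γ
  have h3 : (2:ℝ)^γ * (1 + γ * (x - 1)) ≤ (γ + 1) * x ^ γ := by
    have step : 1 + γ * (x - 1) ≤ (γ + 1) * ((x/2) ^ γ) := by
      nlinarith [h2, mul_nonneg (by linarith : (0:ℝ) ≤ γ - 1) (by linarith : (0:ℝ) ≤ x/2 - 1)]
    rw [h4] at step
    rw [← le_div_iff₀' h6]
    calc 1 + γ * (x - 1) ≤ (γ + 1) * (x ^ γ / 2 ^ γ) := step
      _ = (γ + 1) * x ^ γ / 2 ^ γ := by ring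
  have h5 : (x - 1) ^ γ ≤ x ^ γ :=
    Real.rpow_le_rpow (by linarith) (by linarith) (by linarith)
  have h7 : γ + 1 ≤ (2:ℝ) ^ γ := by nlinarith [ecd_two_rpow_big hγ]
  nlinarith [mul_le_mul_of_nonneg_left h5 (by linarith : (0:ℝ) ≤ (2:ℝ)^γ - (γ+1))]

/-- Structure identity: `F(a, r - a) = (a^γ/γ) φ(r/a)`. -/
lemma ecd_F_eq {γ a r : ℝ} (hγ : 2 ≤ γ) (ha : 0 < a) (hr : 0 ≤ r) :
    (1/γ) * r ^ γ - a ^ (γ-1) * (r - a) - (1/γ) * a ^ γ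
      = a ^ γ / γ * ((r/a) ^ γ - 1 - γ * (r/a - 1)) := by
  have hγ0 : (0:ℝ) < γ := by linarith
  have ht : (0:ℝ) ≤ r / a := div_nonneg hr ha.le
  have hat : r = a * (r / a) := by field_simp
  have hrγ : r ^ γ = a ^ γ * (r/a) ^ γ := by
    nth_rewrite 1 [hat]; rw [Real.mul_rpow ha.le ht]
  have haγ : a ^ (γ - 1) * a = a ^ γ := by
    have h := Real.rpow_add ha (γ-1) 1
    rw [Real.rpow_one] at h
    rw [← h]; norm_num
  have hra : a ^ (γ-1) * (r - a) = a ^ γ * (r/a - 1) := by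
    nth_rewrite 1 [hat]
    rw [← haγ]; ring
  rw [hrγ, hra]
  field_simp
  ring

/-- Pointwise nonnegativity of `F`. -/
lemma ecd_F_nonneg {γ a r : ℝ} (hγ : 2 ≤ γ) (ha : 0 < a) (hr : 0 ≤ r) :
    0 ≤ (1/γ) * r ^ γ - a ^ (γ-1) * (r - a) - (1/γ) * a ^ γ := by
  rw [ecd_F_eq hγ ha hr]
  have hφ : 0 ≤ (r/a) ^ γ - 1 - γ * (r/a - 1) := by
    have := ecd_phi_nonneg hγ (div_nonneg hr ha.le)
    linarith
  positivity

/-- Pointwise quadratic bound on `{|R| ≤ a}`. -/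
lemma ecd_pt_quad {γ c a r : ℝ} (hγ : 2 ≤ γ) (hc : 0 < c) (hca : c ≤ a) (hr : 0 ≤ r)
    (hR : |r - a| ≤ a) :
    (r - a) ^ 2 ≤ γ * c ^ (2 - γ) *
      ((1/γ) * r ^ γ - a ^ (γ-1) * (r - a) - (1/γ) * a ^ γ) := by
  have ha : 0 < a := lt_of_lt_of_le hc hca
  have hγ0 : (0:ℝ) < γ := by linarith
  set t := r / a with htdef
  have hat : r = a * t := by rw [htdef]; field_simp
  have ht0 : 0 ≤ t := div_nonneg hr ha.le
  have ht2 : t ≤ 2 := by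
    have h1 : r - a ≤ a := (abs_le.mp hR).2
    rw [htdef, div_le_iff₀ ha]; linarith
  have hφ := ecd_phi_quad hγ ht0 ht2
  have hφ0 : 0 ≤ t ^ γ - 1 - γ * (t - 1) := by
    have := ecd_phi_nonneg hγ ht0; linarith
  rw [ecd_F_eq hγ ha hr]
  have hkey : a ^ (2:ℕ) ≤ c ^ (2 - γ) * a ^ γ := by
    have h1 : a ^ ((2:ℕ):ℝ) = a ^ (2 - γ) * a ^ γ := by
      rw [← Real.rpow_add ha]; norm_num
    have h2 : a ^ (2 - γ) ≤ c ^ (2 - γ) :=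
      Real.rpow_le_rpow_of_nonpos hc hca (by linarith)
    have h3 : a ^ (((2:ℕ)):ℝ) = a ^ (2:ℕ) := Real.rpow_natCast a 2
    have h4 : (0:ℝ) ≤ a ^ γ := Real.rpow_nonneg ha.le γ
    nlinarith [h1, h2, h3, h4]
  have hRt : (r - a) ^ 2 = a ^ 2 * (t - 1) ^ 2 := by rw [hat]; ring
  have m1 : a ^ 2 * (t - 1) ^ 2 ≤ (c ^ (2 - γ) * a ^ γ) * (t - 1) ^ 2 :=
    mul_le_mul_of_nonneg_right hkey (sq_nonneg _)
  have hcγ : (0:ℝ) ≤ c ^ (2 - γ) := (Real.rpow_pos_of_pos hc _).le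
  have haγ : (0:ℝ) ≤ a ^ γ := Real.rpow_nonneg ha.le γ
  have m2 : (c ^ (2 - γ) * a ^ γ) * (t - 1) ^ 2
      ≤ (c ^ (2 - γ) * a ^ γ) * (t ^ γ - 1 - γ * (t - 1)) :=
    mul_le_mul_of_nonneg_left hφ (by positivity)
  have e1 : γ * c ^ (2 - γ) * (a ^ γ / γ * (t ^ γ - 1 - γ * (t - 1)))
      = (c ^ (2 - γ) * a ^ γ) * (t ^ γ - 1 - γ * (t - 1)) := by
    field_simp
  rw [hRt, e1]
  linarith

/-- Pointwise `γ`-power bound on `{R ≥ a}`. -/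
lemma ecd_pt_pow {γ a r : ℝ} (hγ : 2 ≤ γ) (ha : 0 < a) (hr : 0 ≤ r)
    (hR : a ≤ r - a) :
    (r - a) ^ γ ≤ γ * (2:ℝ)^γ / ((2:ℝ)^γ - (γ + 1)) *
      ((1/γ) * r ^ γ - a ^ (γ-1) * (r - a) - (1/γ) * a ^ γ) := by
  have hγ0 : (0:ℝ) < γ := by linarith
  set t := r / a with htdef
  have hat : r = a * t := by rw [htdef]; field_simp
  have ht2 : 2 ≤ t := by
    rw [htdef, le_div_iff₀ ha]; linarith
  have ht0 : (0:ℝ) ≤ t := by linarith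
  have hδ : (0:ℝ) < (2:ℝ)^γ - (γ + 1) := by
    have := ecd_two_rpow_big hγ; nlinarith
  have h2γ : (0:ℝ) < (2:ℝ)^γ := Real.rpow_pos_of_pos (by norm_num) γ
  have haγ : (0:ℝ) ≤ a ^ γ := Real.rpow_nonneg ha.le γ
  have hφ := ecd_phi_pow hγ ht2
  have hRt : (r - a) ^ γ = a ^ γ * (t - 1) ^ γ := by
    have e : r - a = a * (t - 1) := by rw [hat]; ring
    rw [e, Real.mul_rpow ha.le (by linarith : (0:ℝ) ≤ t - 1)]
  rw [ecd_F_eq hγ ha hr, hRt]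
  rw [show γ * (2:ℝ)^γ / ((2:ℝ)^γ - (γ + 1)) * (a ^ γ / γ * (t ^ γ - 1 - γ * (t - 1)))
      = ((2:ℝ)^γ * (a ^ γ * (t ^ γ - 1 - γ * (t - 1)))) / ((2:ℝ)^γ - (γ + 1)) by
    field_simp]
  rw [le_div_iff₀ hδ]
  nlinarith [mul_le_mul_of_nonneg_left hφ haγ]

lemma ecd_measurableSet_Q (d : ℕ) : MeasurableSet (Q d) := by
  have h : Q d = ⋂ i, (fun x : E d => x i) ⁻¹' Set.Ico (0:ℝ) 1 := by
    ext x; simp [Q, Set.mem_iInter]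
  rw [h]
  exact MeasurableSet.iInter fun i => (by fun_prop : Continuous fun x : E d => x i).measurable measurableSet_Ico

/-- L^γ/L² control of the density difference by the relative entropy. -/
theorem entropy_controls_density (d : ℕ) (hd : 1 ≤ d) (γ c M : ℝ)
    (hγ : 2 ≤ γ) (hc : 0 < c) (hcM : c ≤ M) :
    ∃ C > 0, ∀ (ρ ρbar : E d → ℝ),
      Measurable ρ → Measurable ρbar →
      (∀ x, 0 ≤ ρ x) → (∀ x, c ≤ ρbar x) → (∀ x, ρbar x ≤ M) →
      IntegrableOn (fun x =>
        (1 / γ) * ρ x ^ γ - ρbar x ^ (γ - 1) * (ρ x - ρbar x) - (1 / γ) * ρbar x ^ γ)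
        (Q d) →
      (∀ x, |ρ x - ρbar x| ≤ ρbar x →
        (ρ x - ρbar x) ^ 2 ≤ C * ((1 / γ) * ρ x ^ γ
          - ρbar x ^ (γ - 1) * (ρ x - ρbar x) - (1 / γ) * ρbar x ^ γ))
      ∧ (∀ x, ρbar x ≤ ρ x - ρbar x →
        (ρ x - ρbar x) ^ γ ≤ C * ((1 / γ) * ρ x ^ γ
          - ρbar x ^ (γ - 1) * (ρ x - ρbar x) - (1 / γ) * ρbar x ^ γ))
      ∧ (∫ x in Q d ∩ {x | |ρ x - ρbar x| ≤ ρbar x}, (ρ x - ρbar x) ^ 2)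
          + (∫ x in Q d ∩ {x | ρbar x ≤ ρ x - ρbar x}, (ρ x - ρbar x) ^ γ)
        ≤ C * ∫ x in Q d,
            (1 / γ) * ρ x ^ γ - ρbar x ^ (γ - 1) * (ρ x - ρbar x)
              - (1 / γ) * ρbar x ^ γ := by
  have hγ0 : (0:ℝ) < γ := by linarith
  have hδ : (0:ℝ) < (2:ℝ)^γ - (γ + 1) := by
    have := ecd_two_rpow_big hγ; nlinarith
  have h2γ : (0:ℝ) < (2:ℝ)^γ := Real.rpow_pos_of_pos (by norm_num) γ
  set C₁ : ℝ := γ * c ^ (2 - γ) with hC₁def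
  set C₂ : ℝ := γ * (2:ℝ)^γ / ((2:ℝ)^γ - (γ + 1)) with hC₂def
  have hC₁ : 0 < C₁ := by
    have := Real.rpow_pos_of_pos hc (2 - γ); positivity
  have hC₂ : 0 < C₂ := by positivity
  refine ⟨C₁ + C₂, by positivity, ?_⟩
  intro ρ ρbar hρ hρbar hρ0 hρbarc hρbarM hInt
  set F : E d → ℝ := fun x =>
    (1 / γ) * ρ x ^ γ - ρbar x ^ (γ - 1) * (ρ x - ρbar x) - (1 / γ) * ρbar x ^ γ with hFdef
  have haQ : ∀ x, 0 < ρbar x := fun x => lt_of_lt_of_le hc (hρbarc x)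
  have hF0 : ∀ x, 0 ≤ F x := fun x => ecd_F_nonneg hγ (haQ x) (hρ0 x)
  have hpt1 : ∀ x, |ρ x - ρbar x| ≤ ρbar x → (ρ x - ρbar x) ^ 2 ≤ C₁ * F x :=
    fun x hx => ecd_pt_quad hγ hc (hρbarc x) (hρ0 x) hx
  have hpt2 : ∀ x, ρbar x ≤ ρ x - ρbar x → (ρ x - ρbar x) ^ γ ≤ C₂ * F x :=
    fun x hx => ecd_pt_pow hγ (haQ x) (hρ0 x) hx
  refine ⟨?_, ?_, ?_⟩
  · intro x hx
    have h := hpt1 x hx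
    have h2 := mul_nonneg hC₂.le (hF0 x)
    show (ρ x - ρbar x) ^ 2 ≤ (C₁ + C₂) * F x
    nlinarith
  · intro x hx
    have h := hpt2 x hx
    have h2 := mul_nonneg hC₁.le (hF0 x)
    show (ρ x - ρbar x) ^ γ ≤ (C₁ + C₂) * F x
    nlinarith
  · -- integral estimate
    set A : Set (E d) := Q d ∩ {x | |ρ x - ρbar x| ≤ ρbar x} with hAdef
    set B : Set (E d) := Q d ∩ {x | ρbar x ≤ ρ x - ρbar x} with hBdef
    have hQm : MeasurableSet (Q d) := ecd_measurableSet_Q d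
    have hAm : MeasurableSet A :=
      hQm.inter (measurableSet_le (hρ.sub hρbar).abs hρbar)
    have hBm : MeasurableSet B :=
      hQm.inter (measurableSet_le hρbar (hρ.sub hρbar))
    have hIntA : IntegrableOn F A := hInt.mono_set Set.inter_subset_left
    have hIntB : IntegrableOn F B := hInt.mono_set Set.inter_subset_left
    have hIntQpos : (0:ℝ) ≤ ∫ x in Q d, F x :=
      integral_nonneg fun x => hF0 x
    have hAle : ∫ x in A, F x ≤ ∫ x in Q d, F x :=
      setIntegral_mono_set hInt (Filter.Eventually.of_forall hF0)
        (HasSubset.Subset.eventuallyLE Set.inter_subset_left)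
    have hBle : ∫ x in B, F x ≤ ∫ x in Q d, F x :=
      setIntegral_mono_set hInt (Filter.Eventually.of_forall hF0)
        (HasSubset.Subset.eventuallyLE Set.inter_subset_left)
    -- integrability of R² on A
    have hmeas2 : Measurable fun x => (ρ x - ρbar x) ^ 2 := (hρ.sub hρbar).pow_const 2
    have hboundA : ∀ᵐ x ∂(volume.restrict A), ‖(ρ x - ρbar x) ^ 2‖ ≤ C₁ * F x := by
      filter_upwards [ae_restrict_mem hAm] with x hx
      rw [Real.norm_eq_abs, abs_of_nonneg (sq_nonneg _)]
      exact hpt1 x hx.2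
    have hInt2 : IntegrableOn (fun x => (ρ x - ρbar x) ^ 2) A :=
      Integrable.mono' (hIntA.const_mul C₁) hmeas2.aestronglyMeasurable hboundA
    have hA2 : ∫ x in A, (ρ x - ρbar x) ^ 2 ≤ C₁ * ∫ x in A, F x := by
      rw [← integral_const_mul]
      refine integral_mono_ae hInt2 (hIntA.const_mul C₁) ?_
      filter_upwards [ae_restrict_mem hAm] with x hx
      exact hpt1 x hx.2
    -- integrability of R^γ on B
    have hmeasγ : Measurable fun x => (ρ x - ρbar x) ^ γ :=
      (Real.continuous_rpow_const hγ0.le).measurable.comp (hρ.sub hρbar)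
    have hboundB : ∀ᵐ x ∂(volume.restrict B), ‖(ρ x - ρbar x) ^ γ‖ ≤ C₂ * F x := by
      filter_upwards [ae_restrict_mem hBm] with x hx
      have hR0 : (0:ℝ) ≤ ρ x - ρbar x := le_trans (haQ x).le hx.2
      rw [Real.norm_eq_abs, abs_of_nonneg (Real.rpow_nonneg hR0 γ)]
      exact hpt2 x hx.2
    have hIntγ : IntegrableOn (fun x => (ρ x - ρbar x) ^ γ) B :=
      Integrable.mono' (hIntB.const_mul C₂) hmeasγ.aestronglyMeasurable hboundB
    have hBγ : ∫ x in B, (ρ x - ρbar x) ^ γ ≤ C₂ * ∫ x in B, F x := by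
      rw [← integral_const_mul]
      refine integral_mono_ae hIntγ (hIntB.const_mul C₂) ?_
      filter_upwards [ae_restrict_mem hBm] with x hx
      exact hpt2 x hx.2
    have h1 : C₁ * ∫ x in A, F x ≤ C₁ * ∫ x in Q d, F x :=
      mul_le_mul_of_nonneg_left hAle hC₁.le
    have h2 : C₂ * ∫ x in B, F x ≤ C₂ * ∫ x in Q d, F x :=
      mul_le_mul_of_nonneg_left hBle hC₂.le
    show (∫ x in A, (ρ x - ρbar x) ^ 2) + (∫ x in B, (ρ x - ρbar x) ^ γ)
        ≤ (C₁ + C₂) * ∫ x in Q d, F x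
    calc (∫ x in A, (ρ x - ρbar x) ^ 2) + ∫ x in B, (ρ x - ρbar x) ^ γ
        ≤ C₁ * (∫ x in Q d, F x) + C₂ * (∫ x in Q d, F x) := by linarith
      _ = (C₁ + C₂) * ∫ x in Q d, F x := by ring

end
end
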